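/- Let D be a countable dense subset of 2^ω and 𝔄_0 the algebra generated by traces of clopen sets and finite subsets of D, with the measure μ_0((C ∩ D) △ F) = λ(C). Then μ_0 is nonatomic in the sense that for every A ∈ 𝔄_0 and every ε > 0, A can be written as a finite union of elements of 𝔄_0 each of μ_0-measure at most ε. -/

import Mathlib

open MeasureTheory

/-- The algebra 𝔄₀ of subsets of D generated by traces of clopen subsets of
2^ω = ℕ → Bool and finite subsets of D. -/
def alg0 (D : Set (ℕ → Bool)) : Set (Set (ℕ → Bool)) :=
  ⋂₀ {𝔇 : Set (Set (ℕ → Bool)) |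
    (∀ C : Set (ℕ → Bool), IsClopen C → C ∩ D ∈ 𝔇) ∧
    (∀ F : Set (ℕ → Bool), F.Finite → F ⊆ D → F ∈ 𝔇) ∧
    (∀ A ∈ 𝔇, ∀ B ∈ 𝔇, A ∪ B ∈ 𝔇) ∧
    (∀ A ∈ 𝔇, ∀ B ∈ 𝔇, A ∩ B ∈ 𝔇) ∧
    (∀ A ∈ 𝔇, D \ A ∈ 𝔇)}

lemma alg0_clopen {D C : Set (ℕ → Bool)} (hC : IsClopen C) : C ∩ D ∈ alg0 D :=
  fun _ h𝔇 => h𝔇.1 C hC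

lemma alg0_finite {D F : Set (ℕ → Bool)} (hF : F.Finite) (hFD : F ⊆ D) : F ∈ alg0 D :=
  fun _ h𝔇 => h𝔇.2.1 F hF hFD

lemma alg0_inter {D A B : Set (ℕ → Bool)} (hA : A ∈ alg0 D) (hB : B ∈ alg0 D) :
    A ∩ B ∈ alg0 D :=
  fun 𝔇 h𝔇 => h𝔇.2.2.2.1 A (hA 𝔇 h𝔇) B (hB 𝔇 h𝔇)

lemma alg0_compl {D A : Set (ℕ → Bool)} (hA : A ∈ alg0 D) : D \ A ∈ alg0 D :=
  fun 𝔇 h𝔇 => h𝔇.2.2.2.2 A (hA 𝔇 h𝔇)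

/-- Characterization: every element of alg0 D is a subset of D which differs from a
clopen trace by a finite set. -/
lemma alg0_char {D A : Set (ℕ → Bool)} (hA : A ∈ alg0 D) :
    A ⊆ D ∧ ∃ C : Set (ℕ → Bool), IsClopen C ∧ (symmDiff A (C ∩ D)).Finite := by
  have := hA {A | A ⊆ D ∧ ∃ C : Set (ℕ → Bool), IsClopen C ∧ (symmDiff A (C ∩ D)).Finite}
  apply this
  refine ⟨?_, ?_, ?_, ?_, ?_⟩
  · intro C hC
    exact ⟨Set.inter_subset_right, C, hC, by simp⟩
  · intro F hF hFD
    refine ⟨hFD, ∅, isClopen_empty, ?_⟩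
    have : symmDiff F (∅ ∩ D) = F := by rw [Set.empty_inter]; exact symmDiff_bot F
    rwa [this]
  · rintro A ⟨hAD, C₁, hC₁, hF₁⟩ B ⟨hBD, C₂, hC₂, hF₂⟩
    refine ⟨Set.union_subset hAD hBD, C₁ ∪ C₂, hC₁.union hC₂, ?_⟩
    apply Set.Finite.subset (hF₁.union hF₂)
    intro x hx
    simp only [Set.mem_symmDiff, Set.mem_union, Set.mem_inter_iff] at hx ⊢
    tauto
  · rintro A ⟨hAD, C₁, hC₁, hF₁⟩ B ⟨hBD, C₂, hC₂, hF₂⟩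
    refine ⟨fun x hx => hAD hx.1, C₁ ∩ C₂, hC₁.inter hC₂, ?_⟩
    apply Set.Finite.subset (hF₁.union hF₂)
    intro x hx
    simp only [Set.mem_symmDiff, Set.mem_union, Set.mem_inter_iff] at hx ⊢
    tauto
  · rintro A ⟨hAD, C₁, hC₁, hF₁⟩
    refine ⟨Set.diff_subset, C₁ᶜ, hC₁.compl, ?_⟩
    apply Set.Finite.subset hF₁
    intro x hx
    simp only [Set.mem_symmDiff, Set.mem_diff, Set.mem_inter_iff, Set.mem_compl_iff] at hx ⊢
    by_cases hxD : x ∈ D <;> tauto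

/-- μ₀ is nonatomic: every A ∈ 𝔄₀ is a finite union of elements
of 𝔄₀ of measure at most ε. -/
theorem stmt_10 (lam : Measure (ℕ → Bool))
    (hlam : ∀ (s : Finset ℕ) (σ : ℕ → Bool),
      lam {x | ∀ i ∈ s, x i = σ i} = (1/2 : ENNReal) ^ s.card)
    (D : Set (ℕ → Bool)) (hDc : D.Countable) (hDd : Dense D)
    (μ₀ : Set (ℕ → Bool) → ℝ)
    (hμ₀ : ∀ C F : Set (ℕ → Bool), IsClopen C → F.Finite → F ⊆ D →
      μ₀ (symmDiff (C ∩ D) F) = (lam C).toReal) :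
    ∀ A ∈ alg0 D, ∀ ε : ℝ, 0 < ε →
      ∃ t : Finset (Set (ℕ → Bool)),
        (∀ B ∈ t, B ∈ alg0 D ∧ μ₀ B ≤ ε) ∧ A = ⋃₀ ↑t := by
  classical
  intro A hA ε hε
  obtain ⟨hAD, C, hC, hfin⟩ := alg0_char hA
  set F : Set (ℕ → Bool) := symmDiff A (C ∩ D) with hFdef
  have hFD : F ⊆ D := by
    intro x hx
    rcases Set.mem_symmDiff.1 hx with ⟨h, _⟩ | ⟨h, _⟩
    · exact hAD h
    · exact h.2
  have hAF : A = symmDiff (C ∩ D) F := by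
    rw [hFdef, symmDiff_comm A (C ∩ D), symmDiff_symmDiff_cancel_left]
  -- choose n with (1/2)^n ≤ ε
  obtain ⟨n, hn⟩ := exists_pow_lt_of_lt_one hε (by norm_num : (1/2:ℝ) < 1)
  -- cylinders
  set cyl : (Fin n → Bool) → Set (ℕ → Bool) :=
    fun σ => {x | ∀ i : Fin n, x i = σ i} with hcyl
  have hcylClopen : ∀ σ, IsClopen (cyl σ) := by
    intro σ
    have : cyl σ = ⋂ i : Fin n, {x | x i = σ i} := by ext x; simp [hcyl]
    rw [this]
    exact isClopen_iInter_of_finite fun i =>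
      (isClopen_discrete {σ i}).preimage (continuous_apply (i:ℕ))
  have hcylMeas : ∀ σ, lam (cyl σ) = (1/2 : ENNReal) ^ n := by
    intro σ
    have : cyl σ = {x | ∀ i ∈ Finset.range n,
        x i = (fun j => if h : j < n then σ ⟨j, h⟩ else false) i} := by
      ext x
      simp only [hcyl, Set.mem_setOf_eq, Finset.mem_range]
      constructor
      · intro h i hi; simpa [hi] using h ⟨i, hi⟩
      · intro h i; simpa [i.isLt] using h i i.isLt
    rw [this, hlam, Finset.card_range]
  -- the small pieces
  set piece : (Fin n → Bool) → Set (ℕ → Bool) :=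
    fun σ => (C ∩ cyl σ ∩ D) \ F with hpiece
  refine ⟨insert (F \ (C ∩ D)) (Finset.image piece Finset.univ), ?_, ?_⟩
  · intro B hB
    rcases Finset.mem_insert.1 hB with rfl | hB
    · constructor
      · exact alg0_finite hfin.diff (fun x hx => hFD hx.1)
      · have : F \ (C ∩ D) = symmDiff (∅ ∩ D) (F \ (C ∩ D)) := by
          rw [Set.empty_inter]; exact (bot_symmDiff _).symm
        rw [this, hμ₀ ∅ (F \ (C ∩ D)) isClopen_empty hfin.diff (fun x hx => hFD hx.1)]
        simp
        linarith
    · obtain ⟨σ, _, rfl⟩ := Finset.mem_image.1 hB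
      constructor
      · have hmem : (C ∩ cyl σ ∩ D) ∩ (D \ F) ∈ alg0 D :=
          alg0_inter (alg0_clopen ((hC.inter (hcylClopen σ))))
            (alg0_compl (alg0_finite hfin hFD))
        have : piece σ = (C ∩ cyl σ ∩ D) ∩ (D \ F) := by
          ext x
          simp only [hpiece, Set.mem_diff, Set.mem_inter_iff]
          tauto
        rw [this]; exact hmem
      · have heq : piece σ = symmDiff ((C ∩ cyl σ) ∩ D) (F ∩ ((C ∩ cyl σ) ∩ D)) := by
          ext x
          simp only [hpiece, Set.mem_symmDiff, Set.mem_diff, Set.mem_inter_iff]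
          tauto
        rw [heq, hμ₀ (C ∩ cyl σ) (F ∩ ((C ∩ cyl σ) ∩ D)) (hC.inter (hcylClopen σ))
          (hfin.inter_of_left _) (fun x hx => hx.2.2)]
        have hle : lam (C ∩ cyl σ) ≤ (1/2 : ENNReal) ^ n := by
          rw [← hcylMeas σ]
          exact measure_mono (fun x hx => hx.2)
        have h2 : ((1/2 : ENNReal) ^ n).toReal = (1/2 : ℝ) ^ n := by
          simp [ENNReal.toReal_pow]
        calc (lam (C ∩ cyl σ)).toReal ≤ ((1/2 : ENNReal) ^ n).toReal :=
              ENNReal.toReal_mono (by simp) hle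
          _ = (1/2:ℝ)^n := h2
          _ ≤ ε := le_of_lt hn
  · rw [Finset.coe_insert, Set.sUnion_insert, Finset.coe_image, Finset.coe_univ,
      Set.image_univ, Set.sUnion_range]
    ext x
    simp only [Set.mem_union, Set.mem_iUnion, hpiece, Set.mem_diff, Set.mem_inter_iff,
      hAF, Set.mem_symmDiff]
    constructor
    · rintro (⟨⟨hxC, hxD⟩, hxF⟩ | ⟨hxF, hxCD⟩)
      · exact Or.inr ⟨fun i => x i, ⟨⟨hxC, fun i => rfl⟩, hxD⟩, hxF⟩
      · exact Or.inl ⟨hxF, hxCD⟩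
    · rintro (⟨hxF, hxCD⟩ | ⟨σ, ⟨⟨hxC, _⟩, hxD⟩, hxF⟩)
      · exact Or.inr ⟨hxF, hxCD⟩
      · exact Or.inl ⟨⟨hxC, hxD⟩, hxF⟩
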